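/- For all integers i and n with 0 ≤ i ≤ D and 0 ≤ n ≤ D, the polynomial v_i satisfies v_i(D − 2n) = C(D,i) · Σ_{j=0}^{i} (−2)^j · C(i,j)·C(n,j) / C(D,j), where C(a,b) denotes the binomial coefficient. Equivalently, v_i(t) = C(D,i)·K_i((D−t)/2; 2, D) where K_i is the Krawtchouk polynomial K_i(t;q,n) = Σ_{j=0}^i (−q)^j C(i,j)C(t,j)/C(n,j). -/

import Mathlib

open Polynomial Finset

noncomputable def krA (D n j : ℕ) : ℂ := (-2) ^ j * (n.choose j : ℂ) / (D.choose j : ℂ)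

noncomputable def krS (D n m : ℕ) : ℂ :=
  (D.choose m : ℂ) *
    ∑ j ∈ Finset.range (m + 1),
      (-2 : ℂ) ^ j * (m.choose j : ℂ) * (n.choose j : ℂ) / (D.choose j : ℂ)

lemma choose_ne (a b : ℕ) (h : b ≤ a) : ((a.choose b : ℂ)) ≠ 0 :=
  Nat.cast_ne_zero.mpr (Nat.choose_pos h).ne'

lemma krA_succ (D n j : ℕ) (hj : j < D) :
    ((D:ℂ) - j) * krA D n (j+1) = (-2) * ((n:ℂ) - j) * krA D n j := by
  rcases le_or_gt (j+1) n with h | h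
  · have hn : j ≤ n := by omega
    have e1 : (n.choose (j+1) : ℂ) * ((j:ℂ)+1) = (n.choose j : ℂ) * ((n:ℂ) - j) := by
      have h' : ((n.choose (j+1) * (j+1) : ℕ) : ℂ) = ((n.choose j * (n-j) : ℕ):ℂ) := by
        rw [Nat.choose_succ_right_eq]
      push_cast [Nat.cast_sub hn] at h'
      linear_combination h'
    have e2 : (D.choose (j+1) : ℂ) * ((j:ℂ)+1) = (D.choose j : ℂ) * ((D:ℂ) - j) := by
      have h' : ((D.choose (j+1) * (j+1) : ℕ) : ℂ) = ((D.choose j * (D-j) : ℕ):ℂ) := by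
        rw [Nat.choose_succ_right_eq]
      push_cast [Nat.cast_sub hj.le] at h'
      linear_combination h'
    have h1 : (D.choose j : ℂ) ≠ 0 := choose_ne _ _ hj.le
    have h2 : (D.choose (j+1) : ℂ) ≠ 0 := choose_ne _ _ hj
    have hj1 : ((j:ℂ)+1) ≠ 0 := Nat.cast_add_one_ne_zero j
    apply mul_left_cancel₀ hj1
    unfold krA
    field_simp
    ring_nf
    ring_nf at e1 e2
    linear_combination (2 * (-2:ℂ)^j) * ((n.choose (1+j) : ℂ) * e2 - (D.choose (1+j) : ℂ) * e1)
  · have hz : n.choose (j+1) = 0 := Nat.choose_eq_zero_of_lt h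
    rcases lt_or_eq_of_le (Nat.lt_succ_iff.mp h) with h2 | h2
    · have hz2 : n.choose j = 0 := Nat.choose_eq_zero_of_lt h2
      simp [krA, hz, hz2]
    · simp [krA, hz, h2]

lemma coeffId (D i m : ℕ) (h1 : 1 ≤ i) :
    ((D:ℂ) - 2*((m:ℂ)+1)) * (i.choose (m+1) : ℂ) + ((D:ℂ) - m) * (i.choose m : ℂ)
      = (i:ℂ) * ((i-1).choose (m+1) : ℂ) + ((D:ℂ) - i) * ((i+1).choose (m+1) : ℂ) := by
  have pascal : ((i+1).choose (m+1) : ℂ) = (i.choose m : ℂ) + (i.choose (m+1) : ℂ) := by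
    exact_mod_cast congrArg (Nat.cast : ℕ → ℂ) (Nat.choose_succ_succ i m)
  have f1 : (i.choose (m+1) : ℂ) * ((m:ℂ)+1) = (i.choose m : ℂ) * ((i:ℂ) - m) := by
    rcases le_or_gt m i with h | h
    · have h' : ((i.choose (m+1) * (m+1) : ℕ) : ℂ) = ((i.choose m * (i-m) : ℕ):ℂ) := by
        rw [Nat.choose_succ_right_eq]
      push_cast [Nat.cast_sub h] at h'
      linear_combination h'
    · simp [Nat.choose_eq_zero_of_lt h, Nat.choose_eq_zero_of_lt (Nat.lt_succ_of_lt h)]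
  have f2 : (i:ℂ) * ((i-1).choose (m+1) : ℂ) = (i.choose (m+1):ℂ) * ((i:ℂ) - ((m:ℂ)+1)) := by
    rcases le_or_gt (m+1) i with h | h
    · have hnat : (i-1).choose (m+1) * ((i-1) + 1) = ((i-1)+1).choose (m+1) * ((i-1) + 1 - (m+1)) :=
        Nat.choose_mul_succ_eq (i-1) (m+1)
      have hii : i - 1 + 1 = i := by omega
      rw [hii] at hnat
      have h' : (((i-1).choose (m+1) * i : ℕ) : ℂ) = ((i.choose (m+1) * (i-(m+1)) : ℕ):ℂ) := by
        rw [hnat]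
      push_cast [Nat.cast_sub h] at h'
      linear_combination h'
    · have hz : i.choose (m+1) = 0 := Nat.choose_eq_zero_of_lt h
      have hz2 : (i-1).choose (m+1) = 0 := Nat.choose_eq_zero_of_lt (by omega)
      simp [hz, hz2]
  linear_combination (-1:ℂ)*f1 + (-1:ℂ)*f2 + (-1)*((D:ℂ)-(i:ℂ)) * pascal

lemma krT_rec (D n i : ℕ) (h1 : 1 ≤ i) (h2 : i + 1 ≤ D) :
    ((D:ℂ) - 2*n) * ∑ j ∈ range (i+2), (i.choose j : ℂ) * krA D n j
      = ∑ j ∈ range (i+2),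
          ((i:ℂ) * ((i-1).choose j : ℂ) + ((D:ℂ) - i) * ((i+1).choose j : ℂ)) * krA D n j := by
  set A : ℕ → ℂ := fun j => ((D:ℂ) - 2*j) * (i.choose j : ℂ) * krA D n j with hA
  set B : ℕ → ℂ := fun j => (i.choose j : ℂ) * (((D:ℂ) - j) * krA D n (j+1)) with hB
  set h : ℕ → ℂ := fun k => (i.choose (k-1) : ℂ) * (((D:ℂ) - ((k-1 : ℕ) : ℂ)) * krA D n k) with hh
  set R : ℕ → ℂ := fun j =>
      ((i:ℂ) * ((i-1).choose j : ℂ) + ((D:ℂ) - i) * ((i+1).choose j : ℂ)) * krA D n j with hR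
  have step1 : ((D:ℂ) - 2*n) * ∑ j ∈ range (i+2), (i.choose j : ℂ) * krA D n j
      = ∑ j ∈ range (i+2), (A j + B j) := by
    rw [Finset.mul_sum]
    refine Finset.sum_congr rfl fun j hj => ?_
    rcases lt_or_ge j D with hjD | hjD
    · simp only [hA, hB]
      linear_combination (-(i.choose j : ℂ)) * (krA_succ D n j hjD)
    · have hji : j = i + 1 := by
        have := Finset.mem_range.mp hj; omega
      have hz : i.choose j = 0 := by rw [hji]; exact Nat.choose_eq_zero_of_lt (by omega)
      simp [hA, hB, hz]
  rw [step1, Finset.sum_add_distrib]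
  have hBh : ∀ j : ℕ, B j = h (j+1) := by
    intro j; simp only [hB, hh, Nat.add_sub_cancel]
  have stepB : ∑ j ∈ range (i+2), B j = (∑ k ∈ range (i+2), h k) - h 0 := by
    rw [Finset.sum_range_succ]
    have hz : B (i+1) = 0 := by
      have : i.choose (i+1) = 0 := Nat.choose_eq_zero_of_lt (by omega)
      simp [hB, this]
    rw [hz, add_zero]
    have := Finset.sum_range_succ' h (i+1)
    simp only [← hBh] at this
    rw [this]; ring
  rw [stepB]
  have main : ∑ j ∈ range (i+2), (A j + h j - R j) = h 0 := by
    rw [Finset.sum_range_succ' (fun j => A j + h j - R j) (i+1)]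
    have hzero : ∀ j, A (j+1) + h (j+1) - R (j+1) = 0 := by
      intro j
      simp only [hA, hh, hR, Nat.add_sub_cancel]
      have := coeffId D i j h1
      push_cast
      linear_combination (krA D n (j+1)) * this
    have hE0 : A 0 + h 0 - R 0 = h 0 := by
      simp only [hA, hh, hR]
      simp [Nat.choose_zero_right]
    simp only [hzero, Finset.sum_const_zero, zero_add, hE0]
  have expand : ∑ j ∈ range (i+2), A j + ((∑ k ∈ range (i+2), h k) - h 0)
      = ∑ j ∈ range (i+2), (A j + h j - R j) + ∑ j ∈ range (i+2), R j - h 0 := by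
    rw [Finset.sum_sub_distrib, Finset.sum_add_distrib]; ring
  rw [expand, main]; ring

lemma krS_eq (D n m : ℕ) :
    krS D n m = (D.choose m : ℂ) * ∑ j ∈ range (m+1), (m.choose j : ℂ) * krA D n j := by
  unfold krS krA
  congr 1
  refine Finset.sum_congr rfl fun j _ => by ring

lemma krS_rec (D n i : ℕ) (h1 : 1 ≤ i) (h2 : i + 1 ≤ D) :
    ((D:ℂ) - 2*n) * krS D n i
      = ((D:ℂ) - i + 1) * krS D n (i-1) + ((i:ℂ) + 1) * krS D n (i+1) := by
  have key := krT_rec D n i h1 h2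
  have split : ∑ j ∈ range (i+2),
        ((i:ℂ) * ((i-1).choose j : ℂ) + ((D:ℂ) - i) * ((i+1).choose j : ℂ)) * krA D n j
      = (i:ℂ) * ∑ j ∈ range (i+2), ((i-1).choose j : ℂ) * krA D n j
        + ((D:ℂ) - i) * ∑ j ∈ range (i+2), ((i+1).choose j : ℂ) * krA D n j := by
    rw [Finset.mul_sum, Finset.mul_sum, ← Finset.sum_add_distrib]
    exact Finset.sum_congr rfl fun j _ => by ring
  rw [split] at key
  have ext1 : ∑ j ∈ range (i+2), (i.choose j : ℂ) * krA D n j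
      = ∑ j ∈ range (i+1), (i.choose j : ℂ) * krA D n j := by
    rw [Finset.sum_range_succ]
    simp [Nat.choose_eq_zero_of_lt (show i < i+1 by omega)]
  have ext2 : ∑ j ∈ range (i+2), ((i-1).choose j : ℂ) * krA D n j
      = ∑ j ∈ range ((i-1)+1), ((i-1).choose j : ℂ) * krA D n j := by
    have e : i - 1 + 1 = i := by omega
    rw [Finset.sum_range_succ, Finset.sum_range_succ, e]
    simp [Nat.choose_eq_zero_of_lt (show i-1 < i by omega),
      Nat.choose_eq_zero_of_lt (show i-1 < i+1 by omega)]
  rw [ext1, ext2] at key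
  have g1 : (D.choose i : ℂ) * (i:ℂ) = ((D:ℂ) - i + 1) * (D.choose (i-1) : ℂ) := by
    have hnat : D.choose ((i-1)+1) * ((i-1)+1) = D.choose (i-1) * (D - (i-1)) :=
      Nat.choose_succ_right_eq D (i-1)
    have e : i - 1 + 1 = i := by omega
    rw [e] at hnat
    have h' : ((D.choose i * i : ℕ) : ℂ) = ((D.choose (i-1) * (D - (i-1)) : ℕ) : ℂ) := by
      rw [hnat]
    push_cast [Nat.cast_sub (show i - 1 ≤ D by omega), Nat.cast_sub h1] at h'
    linear_combination h'
  have g2 : (D.choose i : ℂ) * ((D:ℂ) - i) = ((i:ℂ)+1) * (D.choose (i+1) : ℂ) := by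
    have hnat : D.choose (i+1) * (i+1) = D.choose i * (D - i) :=
      Nat.choose_succ_right_eq D i
    have h' : ((D.choose (i+1) * (i+1) : ℕ) : ℂ) = ((D.choose i * (D - i) : ℕ) : ℂ) := by
      rw [hnat]
    push_cast [Nat.cast_sub (show i ≤ D by omega)] at h'
    linear_combination -h'
  rw [krS_eq, krS_eq, krS_eq]
  linear_combination (D.choose i : ℂ) * key
    + (∑ j ∈ range ((i-1)+1), ((i-1).choose j : ℂ) * krA D n j) * g1
    + (∑ j ∈ range (i+2), ((i+1).choose j : ℂ) * krA D n j) * g2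

theorem stmt9 (D : ℕ) (hD : 3 ≤ D) (v : ℕ → Polynomial ℂ)
    (hv0 : v 0 = 1) (hv1 : v 1 = Polynomial.X)
    (hrec : ∀ i : ℕ, 1 ≤ i → i ≤ D - 1 →
      Polynomial.X * v i =
        Polynomial.C ((D : ℂ) - i + 1) * v (i - 1) + Polynomial.C ((i : ℂ) + 1) * v (i + 1)) :
    ∀ i ≤ D, ∀ n ≤ D,
      (v i).eval ((D : ℂ) - 2 * n) =
        (D.choose i : ℂ) *
          ∑ j ∈ Finset.range (i + 1),
            (-2 : ℂ) ^ j * (i.choose j : ℂ) * (n.choose j : ℂ) / (D.choose j : ℂ) := by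
  suffices H : ∀ i : ℕ, i ≤ D → ∀ n : ℕ, n ≤ D →
      (v i).eval ((D:ℂ) - 2*n) = krS D n i by
    intro i hi n hn
    exact H i hi n hn
  intro i
  induction i using Nat.twoStepInduction with
  | zero =>
    intro _ n hn
    simp [hv0, krS]
  | one =>
    intro _ n hn
    have hD0 : (D:ℂ) ≠ 0 := Nat.cast_ne_zero.mpr (by omega)
    simp [hv1, krS, Finset.sum_range_succ]
    field_simp
    ring
  | more i ih1 ih2 =>
    intro hi n hn
    have hr := hrec (i+1) (by omega) (by omega)
    have hev := congrArg (Polynomial.eval ((D:ℂ) - 2*n)) hr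
    simp only [Polynomial.eval_mul, Polynomial.eval_add, Polynomial.eval_C,
      Polynomial.eval_X, Nat.add_sub_cancel] at hev
    rw [ih1 (by omega) n hn, ih2 (by omega) n hn] at hev
    have hrec2 := krS_rec D n (i+1) (by omega) (by omega)
    simp only [Nat.add_sub_cancel] at hrec2
    have hne : ((i:ℂ)+1+1) ≠ 0 := by
      have := Nat.cast_add_one_ne_zero (R := ℂ) (i+1)
      push_cast at this
      exact this
    have hfin : ((i:ℂ)+1+1) * (v (i+2)).eval ((D:ℂ) - 2*n)
        = ((i:ℂ)+1+1) * krS D n (i+2) := by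
      push_cast at hev hrec2 ⊢
      linear_combination hrec2 - hev
    exact mul_left_cancel₀ hne hfin
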